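/- Let L = L₀ ⊕ L₁ be a nilpotent complex Leibniz superalgebra of total dimension d = dim L₀ + dim L₁. If dim(L/L²) ≥ 3 (i.e. L cannot be generated by two elements), then the nilindex of L is less than d; equivalently, L^{d−1} = 0. -/
import Mathlib


/-- A complex Leibniz superalgebra structure on a vector space `V`:
a bilinear bracket together with an internal ℤ₂-grading `V = L0 ⊕ L1`
such that the bracket respects the grading and the Leibniz superidentity
`[x,[y,z]] = [[x,y],z] − (−1)^{αβ}[[x,z],y]` holds for homogeneous `y, z`. -/
structure LeibnizSuperAlg (V : Type*) [AddCommGroup V] [Module ℂ V] where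
  br : V →ₗ[ℂ] V →ₗ[ℂ] V
  L0 : Submodule ℂ V
  L1 : Submodule ℂ V
  compl : IsCompl L0 L1
  grade00 : ∀ x ∈ L0, ∀ y ∈ L0, br x y ∈ L0
  grade01 : ∀ x ∈ L0, ∀ y ∈ L1, br x y ∈ L1
  grade10 : ∀ x ∈ L1, ∀ y ∈ L0, br x y ∈ L1
  grade11 : ∀ x ∈ L1, ∀ y ∈ L1, br x y ∈ L0
  super_ee : ∀ (x : V), ∀ y ∈ L0, ∀ z ∈ L0,
    br x (br y z) = br (br x y) z - br (br x z) y
  super_eo : ∀ (x : V), ∀ y ∈ L0, ∀ z ∈ L1,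
    br x (br y z) = br (br x y) z - br (br x z) y
  super_oe : ∀ (x : V), ∀ y ∈ L1, ∀ z ∈ L0,
    br x (br y z) = br (br x y) z - br (br x z) y
  super_oo : ∀ (x : V), ∀ y ∈ L1, ∀ z ∈ L1,
    br x (br y z) = br (br x y) z + br (br x z) y

namespace LeibnizSuperAlg

variable {V : Type*} [AddCommGroup V] [Module ℂ V]

/-- The span of all products `[u,v]` with `u ∈ S`, `v ∈ T`. -/
def prodSpan (A : LeibnizSuperAlg V) (S T : Submodule ℂ V) : Submodule ℂ V :=
  Submodule.span ℂ {z : V | ∃ u ∈ S, ∃ v ∈ T, z = A.br u v}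

/-- `A.lcs k` is the `(k+1)`-st term `L^{k+1}` of the descending central series:
`L¹ = L`, `L^{k+1} = [L^k, L]`. -/
def lcs (A : LeibnizSuperAlg V) : ℕ → Submodule ℂ V
  | 0 => ⊤
  | k + 1 => A.prodSpan (lcs A k) ⊤

/-- `A.lcs0 k` is the `(k+1)`-st term `L₀^{k+1}` of the descending central series
of the even part: `L₀¹ = L₀`, `L₀^{k+1} = [L₀^k, L₀]`. -/
def lcs0 (A : LeibnizSuperAlg V) : ℕ → Submodule ℂ V
  | 0 => A.L0
  | k + 1 => A.prodSpan (lcs0 A k) A.L0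

/-- Nilpotency: some term of the descending central series vanishes. -/
def IsNilpotent (A : LeibnizSuperAlg V) : Prop := ∃ s, A.lcs s = ⊥

/-- `S` generates `L`: the smallest subspace containing `S` and closed under the
product is `L` itself. -/
def Generates (A : LeibnizSuperAlg V) (S : Set V) : Prop :=
  ∀ W : Submodule ℂ V, S ⊆ W → (∀ u ∈ W, ∀ v ∈ W, A.br u v ∈ W) → W = ⊤

/-- The operator of right multiplication `R_x : z ↦ [z, x]`. -/
def R (A : LeibnizSuperAlg V) (x : V) : V →ₗ[ℂ] V := A.br.flip x

end LeibnizSuperAlg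

namespace LeibnizSuperAlg

variable {V : Type*} [AddCommGroup V] [Module ℂ V]

lemma prodSpan_mono (A : LeibnizSuperAlg V) {S S' T : Submodule ℂ V} (h : S ≤ S') :
    A.prodSpan S T ≤ A.prodSpan S' T :=
  Submodule.span_mono (by rintro z ⟨u, hu, v, hv, rfl⟩; exact ⟨u, h hu, v, hv, rfl⟩)

lemma prodSpan_bot (A : LeibnizSuperAlg V) (T : Submodule ℂ V) : A.prodSpan ⊥ T = ⊥ := by
  apply le_antisymm _ bot_le
  rw [prodSpan, Submodule.span_le]
  rintro z ⟨u, hu, v, hv, rfl⟩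
  simp only [Submodule.mem_bot] at hu ⊢
  subst hu
  simp

lemma lcs_succ_le (A : LeibnizSuperAlg V) : ∀ k, A.lcs (k + 1) ≤ A.lcs k
  | 0 => le_top
  | k + 1 => A.prodSpan_mono (lcs_succ_le A k)

lemma lcs_le_of_le (A : LeibnizSuperAlg V) {k m : ℕ} (h : k ≤ m) : A.lcs m ≤ A.lcs k := by
  induction m with
  | zero => simp_all
  | succ n ih =>
    rcases Nat.lt_or_ge k (n + 1) with h' | h'
    · exact (A.lcs_succ_le n).trans (ih (Nat.lt_succ_iff.mp h'))
    · have : k = n + 1 := le_antisymm h h'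
      subst this; exact le_rfl

lemma lcs_stab (A : LeibnizSuperAlg V) {k : ℕ} (h : A.lcs (k + 1) = A.lcs k) :
    ∀ m, A.lcs (k + m) = A.lcs k := by
  intro m
  induction m with
  | zero => rfl
  | succ n ih =>
    show A.prodSpan (A.lcs (k + n)) ⊤ = A.lcs k
    rw [ih]; exact h

lemma lcs_eq_bot_of_stab (A : LeibnizSuperAlg V) (hnil : A.IsNilpotent) {k : ℕ}
    (h : A.lcs (k + 1) = A.lcs k) : A.lcs k = ⊥ := by
  obtain ⟨s, hs⟩ := hnil
  have h1 := A.lcs_stab h s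
  have h2 : A.lcs (k + s) ≤ A.lcs s := A.lcs_le_of_le (Nat.le_add_left s k)
  rw [h1, hs] at h2
  exact le_bot_iff.mp h2

end LeibnizSuperAlg


/-- A nilpotent complex Leibniz superalgebra of total dimension
`d = dim L₀ + dim L₁` with `dim(L/L²) ≥ 3` has nilindex less than `d`,
i.e. `L^{d−1} = 0`. -/
theorem statement11 {V : Type*} [AddCommGroup V] [Module ℂ V] [FiniteDimensional ℂ V]
    (A : LeibnizSuperAlg V) (hnil : A.IsNilpotent) (d : ℕ)
    (hd : d = Module.finrank ℂ A.L0 + Module.finrank ℂ A.L1)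
    (h3 : 3 ≤ Module.finrank ℂ (V ⧸ A.lcs 1)) :
    A.lcs (d - 2) = ⊥ := by
  obtain ⟨s, hs⟩ := hnil
  have hVd : Module.finrank ℂ V = d := by
    rw [hd]; exact (Submodule.finrank_add_eq_of_isCompl A.compl).symm
  have hq : Module.finrank ℂ (V ⧸ A.lcs 1) + Module.finrank ℂ (A.lcs 1) = d := by
    rw [← hVd]; exact Submodule.finrank_quotient_add_finrank _
  have hqd : Module.finrank ℂ (V ⧸ A.lcs 1) ≤ d := by omega
  have h1 : Module.finrank ℂ (A.lcs 1) + 3 ≤ d := by omega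
  have key : ∀ j, A.lcs (1 + j) = ⊥ ∨ Module.finrank ℂ (A.lcs (1 + j)) + 3 + j ≤ d := by
    intro j
    induction j with
    | zero => right; simpa using h1
    | succ n ih =>
      have hstep : A.lcs (1 + (n + 1)) = A.prodSpan (A.lcs (1 + n)) ⊤ := by
        rw [show 1 + (n + 1) = (1 + n) + 1 by omega]; rfl
      rcases ih with h | h
      · left; rw [hstep, h, A.prodSpan_bot]
      · by_cases hb : A.lcs (1 + n) = ⊥
        · left; rw [hstep, hb, A.prodSpan_bot]
        · right
          have hle : A.lcs ((1 + n) + 1) ≤ A.lcs (1 + n) := A.lcs_succ_le (1 + n)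
          have hne : A.lcs ((1 + n) + 1) ≠ A.lcs (1 + n) := fun he =>
            hb (A.lcs_eq_bot_of_stab ⟨s, hs⟩ he)
          have hlt : A.lcs ((1 + n) + 1) < A.lcs (1 + n) := lt_of_le_of_ne hle hne
          have hfr := Submodule.finrank_lt_finrank_of_lt hlt
          have : (1 : ℕ) + (n + 1) = (1 + n) + 1 := by omega
          rw [this]
          omega
  have hd3 : 3 ≤ d := by omega
  have hdd : d - 2 = 1 + (d - 3) := by omega
  rw [hdd]
  rcases key (d - 3) with h | h
  · exact h
  · have hz : Module.finrank ℂ (A.lcs (1 + (d - 3))) = 0 := by omega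
    exact Submodule.finrank_eq_zero.mp hz
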